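/- With the definitions and assumptions in the context, if x_0 ∈ S̄_*, then for every i ∈ {0, 1, …, N}, φ(x_0, i·T_s) ∈ S̄_* (i.e., the trajectory under the backup flow remains in S̄_* at all sample times). -/

import Mathlib

open Set

/-- STATEMENT 7: Under the semiflow `φ` on `ℝ^n` with safe set `S_s = {h_s ≥ 0}`, backup safe
set `S_b = {h_b ≥ 0}` with `S_b ⊆ S_s` forward invariant under `φ`, `T_s = T/N`,
`h̄_*(x) = min{h_b(φ(x,N·T_s)), min_{i∈{0,…,N}} h_s(φ(x,i·T_s))}`, and
`S̄_* = {x : h̄_*(x) ≥ 0}`, if `x₀ ∈ S̄_*` then for every `i ∈ {0,1,…,N}`, `φ(x₀, i·T_s) ∈ S̄_*` (the backup trajectory remains in `S̄_*` at all sample times). -/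
theorem SbarStar_invariant_at_sample_times
    (n : ℕ) (hn : 0 < n)
    (φ : EuclideanSpace ℝ (Fin n) → ℝ → EuclideanSpace ℝ (Fin n))
    (hφ0 : ∀ x, φ x 0 = x)
    (hφadd : ∀ (x : EuclideanSpace ℝ (Fin n)) (s t : ℝ), 0 ≤ s → 0 ≤ t →
      φ x (s + t) = φ (φ x s) t)
    (hs hb : EuclideanSpace ℝ (Fin n) → ℝ)
    (Ss Sb : Set (EuclideanSpace ℝ (Fin n)))
    (hSs : Ss = {x | 0 ≤ hs x})
    (hSb : Sb = {x | 0 ≤ hb x})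
    (hsub : Sb ⊆ Ss)
    (hinv : ∀ x ∈ Sb, ∀ t : ℝ, 0 ≤ t → φ x t ∈ Sb)
    (T : ℝ) (hT : 0 < T)
    (N : ℕ) (hN : 0 < N) (Ts : ℝ) (hTs : Ts = T / N)
    (hbarStar : EuclideanSpace ℝ (Fin n) → ℝ)
    (hhbarStar : ∀ x, hbarStar x =
      min (hb (φ x ((N : ℝ) * Ts)))
        ((Finset.range (N + 1)).inf' Finset.nonempty_range_add_one
          (fun i => hs (φ x ((i : ℝ) * Ts)))))
    (SbarStar : Set (EuclideanSpace ℝ (Fin n)))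
    (hSbarStar : SbarStar = {x | 0 ≤ hbarStar x})
    (x₀ : EuclideanSpace ℝ (Fin n)) (hx₀ : x₀ ∈ SbarStar) :
    ∀ i : ℕ, i ≤ N → φ x₀ ((i : ℝ) * Ts) ∈ SbarStar := by
  have hTs0 : 0 ≤ Ts := by
    rw [hTs]; positivity
  have key : ∀ a b : ℕ, φ (φ x₀ ((a : ℝ) * Ts)) ((b : ℝ) * Ts)
      = φ x₀ (((a + b : ℕ) : ℝ) * Ts) := by
    intro a b
    rw [show (((a + b : ℕ) : ℝ) * Ts) = (a : ℝ) * Ts + (b : ℝ) * Ts by push_cast; ring,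
      hφadd x₀ _ _ (by positivity) (by positivity)]
  rw [hSbarStar] at hx₀ ⊢
  have hx : 0 ≤ hbarStar x₀ := hx₀
  rw [hhbarStar, le_min_iff] at hx
  obtain ⟨hb0, hs0⟩ := hx
  have hbmem : φ x₀ ((N : ℝ) * Ts) ∈ Sb := by rw [hSb]; exact hb0
  have hs0' : ∀ j, j ≤ N → 0 ≤ hs (φ x₀ ((j : ℝ) * Ts)) := by
    intro j hj
    exact le_trans hs0 (Finset.inf'_le _ (Finset.mem_range.mpr (Nat.lt_succ_of_le hj)))
  have hSbSs : ∀ k : ℕ, 0 ≤ hs (φ x₀ (((N + k : ℕ) : ℝ) * Ts)) := by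
    intro k
    have : φ x₀ (((N + k : ℕ) : ℝ) * Ts) ∈ Sb := by
      rw [← key]
      exact hinv _ hbmem _ (by positivity)
    have := hsub this
    rw [hSs] at this; exact this
  intro i hi
  show (0 : ℝ) ≤ hbarStar _
  rw [hhbarStar, le_min_iff]
  constructor
  · rw [show φ (φ x₀ ((i : ℝ) * Ts)) ((N : ℝ) * Ts) = φ (φ x₀ ((N : ℝ) * Ts)) ((i : ℝ) * Ts) by
      rw [key, key, Nat.add_comm]]
    have := hinv _ hbmem ((i : ℝ) * Ts) (by positivity)
    rw [hSb] at this; exact this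
  · rw [Finset.le_inf'_iff]
    intro j hj
    rw [key]
    rcases le_or_gt (i + j) N with h | h
    · exact hs0' _ h
    · obtain ⟨k, hk⟩ : ∃ k, i + j = N + k := ⟨i + j - N, by omega⟩
      rw [hk]; exact hSbSs k
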